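/- arXiv:1311.5306 — 6 statements merged into one kernel-verified Lean document; each statement's English description precedes it below -/
import Mathlib

section
/- Let A and B be abelian groups, n a positive integer, and φ : A → B a group homomorphism. If the kernel of φ is n-divisible, and the cokernel of φ is n-divisible and has no n-torsion (the only element x of coker φ with n·x = 0 is x = 0), then the quotient A/nA is isomorphic to B/nB. -/
/-- If a homomorphism `φ : A → B` of abelian groups has an `n`-divisible kernel, and an
`n`-divisible cokernel with no `n`-torsion, then `A/nA ≅ B/nB`. -/
theorem quotient_nsmul_equiv_of_divisible_ker_coker
    {A B : Type*} [AddCommGroup A] [AddCommGroup B] (n : ℕ) (hn : 0 < n) (φ : A →+ B)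
    (hker : ∀ x ∈ φ.ker, ∃ y ∈ φ.ker, n • y = x)
    (hcoker : ∀ x : B ⧸ φ.range, ∃ y : B ⧸ φ.range, n • y = x)
    (htors : ∀ x : B ⧸ φ.range, n • x = 0 → x = 0) :
    Nonempty ((A ⧸ (n • AddMonoidHom.id A).range) ≃+ (B ⧸ (n • AddMonoidHom.id B).range)) := by
  have hmemB : ∀ x : B, x ∈ (n • AddMonoidHom.id B).range ↔ ∃ y : B, n • y = x := by
    intro x
    constructor
    · rintro ⟨y, rfl⟩; exact ⟨y, rfl⟩
    · rintro ⟨y, rfl⟩; exact ⟨y, rfl⟩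
  have hmemA : ∀ x : A, x ∈ (n • AddMonoidHom.id A).range ↔ ∃ y : A, n • y = x := by
    intro x
    constructor
    · rintro ⟨y, rfl⟩; exact ⟨y, rfl⟩
    · rintro ⟨y, rfl⟩; exact ⟨y, rfl⟩
  -- induced map
  set f : A →+ B ⧸ (n • AddMonoidHom.id B).range :=
    (QuotientAddGroup.mk' _).comp φ with hf
  have hsub : (n • AddMonoidHom.id A).range ≤ f.ker := by
    rintro x ⟨y, rfl⟩
    simp only [hf, AddMonoidHom.mem_ker, AddMonoidHom.comp_apply, QuotientAddGroup.mk'_apply]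
    rw [QuotientAddGroup.eq_zero_iff, hmemB]
    exact ⟨φ y, by simp⟩
  set g : (A ⧸ (n • AddMonoidHom.id A).range) →+ (B ⧸ (n • AddMonoidHom.id B).range) :=
    QuotientAddGroup.lift _ f hsub with hg
  have hbij : Function.Bijective g := by
    constructor
    · rw [injective_iff_map_eq_zero]
      intro x hx
      induction x using QuotientAddGroup.induction_on with
      | H a =>
        have hfa : f a = 0 := hx
        rw [hf, AddMonoidHom.comp_apply, QuotientAddGroup.mk'_apply,
          QuotientAddGroup.eq_zero_iff, hmemB] at hfa
        obtain ⟨b, hb⟩ := hfa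
        -- n • (b : coker) = 0
        have hb0 : n • (QuotientAddGroup.mk b : B ⧸ φ.range) = 0 := by
          rw [← QuotientAddGroup.mk_nsmul, QuotientAddGroup.eq_zero_iff, hb]
          exact ⟨a, rfl⟩
        have := htors _ hb0
        rw [QuotientAddGroup.eq_zero_iff] at this
        obtain ⟨a', ha'⟩ := this
        have hker' : a - n • a' ∈ φ.ker := by
          simp [AddMonoidHom.mem_ker, ha', hb]
        obtain ⟨y, hy, hyval⟩ := hker _ hker'
        rw [QuotientAddGroup.eq_zero_iff, hmemA]
        exact ⟨a' + y, by rw [smul_add, hyval]; abel⟩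
    · intro x
      induction x using QuotientAddGroup.induction_on with
      | H b =>
        obtain ⟨y, hy⟩ := hcoker (QuotientAddGroup.mk b)
        induction y using QuotientAddGroup.induction_on with
        | H c =>
          rw [← QuotientAddGroup.mk_nsmul, QuotientAddGroup.eq_iff_sub_mem] at hy
          obtain ⟨a, ha⟩ := hy
          refine ⟨QuotientAddGroup.mk (-a), ?_⟩
          show (QuotientAddGroup.mk (φ (-a)) : B ⧸ (n • AddMonoidHom.id B).range) = _
          rw [QuotientAddGroup.eq_iff_sub_mem, hmemB]
          have ha' : φ a = n • c - b := ha
          refine ⟨-c, ?_⟩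
          rw [smul_neg, map_neg, ha']
          abel
  exact ⟨AddEquiv.ofBijective g hbij⟩
end

section
/- The discriminant Δ of the Weierstrass curve E_{m,n} equals 2ε(m + 24n)·f_m(n), that is, Δ = 2ε(m + 24n)(62208n² + (5184m + 432ε)n + (108m² + 18εm + 1)). -/
/-- The discriminant of the Weierstrass curve
`E_{m,n} : y² + xy = x³ + H(m, n)x + J(m, n)` equals `2ε(m + 24n)f_m(n)`. -/
theorem discriminant_Emn (ε m n : ℤ) (hε : ε = 1 ∨ ε = -1) (A H J : ℚ)
    (hA : A = 18 * ((m : ℚ) + 24 * n) + ε)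
    (hH : H = (1 + 8 * ε * A - 9 * A ^ 4) / 48)
    (hJ : J = -(5 - 8 * ε * A - 24 * ε * A ^ 3 + 9 * A ^ 4 + 18 * A ^ 6) / 576)
    (W : WeierstrassCurve ℚ) (hW : W = ⟨1, 0, 0, H, J⟩) :
    W.Δ = 2 * ε * ((m : ℚ) + 24 * n) *
      (62208 * (n : ℚ) ^ 2 + (5184 * m + 432 * ε) * n + (108 * (m : ℚ) ^ 2 + 18 * ε * m + 1)) := by
  subst hW hJ hH hA
  rcases hε with h | h <;> subst h <;>
    simp [WeierstrassCurve.Δ, WeierstrassCurve.b₂, WeierstrassCurve.b₄,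
      WeierstrassCurve.b₆, WeierstrassCurve.b₈] <;> ring
end

section
/- For every ε ∈ {1, −1} and all integers m and n, setting A = 18(m + 24n) + ε and f_m(n) = 62208n² + (5184m + 432ε)n + (108m² + 18εm + 1), the integer f_m(n) divides A(9A³ − 8ε)(27A⁶ − 36εA³ + 8) − 108(m + 24n)². (Here A(9A³ − 8ε) and 27A⁶ − 36εA³ + 8 are the c₄- and c₆-invariants of the curve E_{m,n}; hence for every prime ℓ dividing f_m(n), −c₄c₆ ≡ −108(m + 24n)² (mod ℓ).) -/
/-- `f_m(n)` divides `c₄·c₆ − 108(m + 24n)²`, where `c₄ = A(9A³ − 8ε)` and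
`c₆ = 27A⁶ − 36εA³ + 8` are the invariants of `E_{m,n}` and `A = 18(m + 24n) + ε`; hence
`−c₄c₆ ≡ −108(m + 24n)² (mod ℓ)` for every prime `ℓ ∣ f_m(n)`. -/
theorem fmn_dvd_c4_mul_c6_sub (ε m n : ℤ) (hε : ε = 1 ∨ ε = -1) (A : ℤ)
    (hA : A = 18 * (m + 24 * n) + ε) :
    (62208 * n ^ 2 + (5184 * m + 432 * ε) * n + (108 * m ^ 2 + 18 * ε * m + 1)) ∣
      (A * (9 * A ^ 3 - 8 * ε)) * (27 * A ^ 6 - 36 * ε * A ^ 3 + 8) - 108 * (m + 24 * n) ^ 2 := by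
  subst hA
  refine ⟨8033551259904 * (m + 24 * n) ^ 8 + 3124158823296 * ε * (m + 24 * n) ^ 7 +
    520693137216 * (m + 24 * n) ^ 6 + 46528722432 * ε * (m + 24 * n) ^ 5 +
    2304328176 * (m + 24 * n) ^ 4 + 58104216 * ε * (m + 24 * n) ^ 3 +
    559872 * (m + 24 * n) ^ 2 + 486 * ε * (m + 24 * n) - 1, ?_⟩
  rcases hε with h | h <;> subst h <;> ring
end

section
/- For every ε ∈ {1, −1} and all integers m and n: 3 divides H(m, n), and J(m, n) ≡ −2εm (mod 3). -/
/-- `3 ∣ H(m, n)` and `J(m, n) ≡ −2εm (mod 3)`. -/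
theorem H_J_mod_three (ε m n : ℤ) (hε : ε = 1 ∨ ε = -1) (A H J : ℤ)
    (hA : A = 18 * (m + 24 * n) + ε)
    (hH : 48 * H = 1 + 8 * ε * A - 9 * A ^ 4)
    (hJ : 576 * J = -(5 - 8 * ε * A - 24 * ε * A ^ 3 + 9 * A ^ 4 + 18 * A ^ 6)) :
    (3 : ℤ) ∣ H ∧ J ≡ -2 * ε * m [ZMOD 3] := by
  subst hA
  rcases hε with rfl | rfl
  · -- ε = 1
    set K : ℤ := m + 24 * n with hK
    have h1 : 48 * H = 9 * (1 + 16 * K - (18 * K + 1) ^ 4) := by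
      linear_combination hH
    have h2 : 16 * H = 3 * (1 + 16 * K - (18 * K + 1) ^ 4) := by linarith
    have hQ : 576 * J = 27 * (-42 * K - 3024 * K ^ 2 - 80352 * K ^ 3
        - 1084752 * K ^ 4 - 7558272 * K ^ 5 - 22674816 * K ^ 6 - 16 * n)
        - 18 * m := by
      linear_combination hJ
    refine ⟨⟨1 + 16 * K - (18 * K + 1) ^ 4 - 5 * H, by linarith⟩, ?_⟩
    refine Int.modEq_iff_dvd.mpr ⟨21 * J - (-42 * K - 3024 * K ^ 2
      - 80352 * K ^ 3 - 1084752 * K ^ 4 - 7558272 * K ^ 5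
      - 22674816 * K ^ 6 - 16 * n), by linarith⟩
  · -- ε = -1
    set K : ℤ := m + 24 * n with hK
    have h1 : 48 * H = 9 * (1 - 16 * K - (18 * K - 1) ^ 4) := by
      linear_combination hH
    have h2 : 16 * H = 3 * (1 - 16 * K - (18 * K - 1) ^ 4) := by linarith
    have hQ : 576 * J = 27 * (42 * K - 3024 * K ^ 2 + 80352 * K ^ 3
        - 1084752 * K ^ 4 + 7558272 * K ^ 5 - 22674816 * K ^ 6 + 16 * n)
        + 18 * m := by
      linear_combination hJ
    refine ⟨⟨1 - 16 * K - (18 * K - 1) ^ 4 - 5 * H, by linarith⟩, ?_⟩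
    refine Int.modEq_iff_dvd.mpr ⟨21 * J - (42 * K - 3024 * K ^ 2
      + 80352 * K ^ 3 - 1084752 * K ^ 4 + 7558272 * K ^ 5
      - 22674816 * K ^ 6 + 16 * n), by linarith⟩
end

section
/- The change of Weierstrass variables with parameters u = 2, r = 1/3 + A², s = 1, t = 0 transforms the Weierstrass curve Y² = X³ − 3A²X² + (8εA/3)X − 16/27 over ℚ (coefficients a₁ = 0, a₂ = −3A², a₃ = 0, a₄ = 8εA/3, a₆ = −16/27) into the Weierstrass curve y² + xy = x³ + H(m, n)·x + J(m, n) (coefficients a₁ = 1, a₂ = 0, a₃ = 0, a₄ = H(m, n), a₆ = J(m, n)). -/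
/-- The change of Weierstrass variables `(u, r, s, t) = (2, 1/3 + A², 1, 0)` transforms the curve
`Y² = X³ − 3A²X² + (8εA/3)X − 16/27` into the global minimal model
`y² + xy = x³ + H(m, n)x + J(m, n)` of `E_{m,n}`. -/
theorem variableChange_Emn (ε m n : ℤ) (hε : ε = 1 ∨ ε = -1) (A : ℤ)
    (hA : A = 18 * (m + 24 * n) + ε) (H J : ℚ)
    (hH : H = (1 + 8 * ε * (A : ℚ) - 9 * (A : ℚ) ^ 4) / 48)
    (hJ : J = -(5 - 8 * ε * (A : ℚ) - 24 * ε * (A : ℚ) ^ 3 + 9 * (A : ℚ) ^ 4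
      + 18 * (A : ℚ) ^ 6) / 576)
    (W : WeierstrassCurve ℚ)
    (hW : W = ⟨0, -3 * (A : ℚ) ^ 2, 0, 8 * ε * (A : ℚ) / 3, -16 / 27⟩)
    (C : WeierstrassCurve.VariableChange ℚ)
    (hC : C = ⟨Units.mk0 2 (by norm_num), 1 / 3 + (A : ℚ) ^ 2, 1, 0⟩) :
    C • W = ⟨1, 0, 0, H, J⟩ := by
  subst hH hJ hW hC
  rcases hε with h | h <;> subst h <;>
    simp only [WeierstrassCurve.variableChange_def, WeierstrassCurve.mk.injEq,
      Units.val_inv_eq_inv_val, Units.val_mk0] <;>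
    push_cast <;>
    refine ⟨by norm_num, by ring, by ring, by ring, by ring⟩
end

section
/- For every ε ∈ {1, −1} and all integers m and n, the discriminant Δ of the Weierstrass curve E_{m,n} satisfies Δ ≡ 2εm (mod 3). In particular, if 3 does not divide m, then 3 does not divide Δ, so E_{m,n} has good reduction at 3. -/
/-- The discriminant of `E_{m,n}` satisfies `Δ ≡ 2εm (mod 3)`; in particular if `3 ∤ m` then
`3 ∤ Δ`, so `E_{m,n}` has good reduction at `3`. -/
theorem discriminant_Emn_mod_three (ε m n : ℤ) (hε : ε = 1 ∨ ε = -1) (A H J : ℤ)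
    (hA : A = 18 * (m + 24 * n) + ε)
    (hH : 48 * H = 1 + 8 * ε * A - 9 * A ^ 4)
    (hJ : 576 * J = -(5 - 8 * ε * A - 24 * ε * A ^ 3 + 9 * A ^ 4 + 18 * A ^ 6))
    (W : WeierstrassCurve ℤ) (hW : W = ⟨1, 0, 0, H, J⟩) :
    W.Δ ≡ 2 * ε * m [ZMOD 3] ∧ (¬ (3 : ℤ) ∣ m → ¬ (3 : ℤ) ∣ W.Δ) := by
  subst hW hA
  set M : ℤ := m + 24 * n with hM
  -- the discriminant as a polynomial in H and J
  have hD : (WeierstrassCurve.mk 1 0 0 H J : WeierstrassCurve ℤ).Δ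
      = -J + H ^ 2 - 64 * H ^ 3 - 432 * J ^ 2 + 72 * H * J := by
    simp only [WeierstrassCurve.Δ, WeierstrassCurve.b₂, WeierstrassCurve.b₄,
      WeierstrassCurve.b₆, WeierstrassCurve.b₈]
    ring
  -- 3 ∣ H
  have h16 : 16 * H = 3 + 48 * ε * M - 3 * (18 * M + ε) ^ 4 := by
    rcases hε with rfl | rfl <;> nlinarith [hH]
  have hHd : (3 : ℤ) ∣ H := by
    have : (3 : ℤ) ∣ 16 * H := ⟨1 + 16 * ε * M - (18 * M + ε) ^ 4, by linarith⟩
    omega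
  -- 3 ∣ J - ε * M
  obtain ⟨k, hk⟩ := Int.even_mul_succ_self M
  have hsq : (M * (M + 1)) ^ 2 = 4 * k ^ 2 := by rw [hk]; ring
  have hJd : (3 : ℤ) ∣ J - ε * M := by
    rcases hε with rfl | rfl
    · have key : 576 * (J - 1 * M) = 1728 * (-M - 47 * M ^ 2 - 1255 * M ^ 3
          - 16949 * M ^ 4 - 118098 * M ^ 5 - 354294 * M ^ 6) - 432 * (M * (M + 1)) ^ 2 := by
        linear_combination hJ
      refine ⟨-M - 47 * M ^ 2 - 1255 * M ^ 3 - 16949 * M ^ 4 - 118098 * M ^ 5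
        - 354294 * M ^ 6 - k ^ 2, ?_⟩
      linarith [key, hsq]
    · have key : 576 * (J - (-1) * M) = 1728 * (M - 47 * M ^ 2 + 1256 * M ^ 3
          - 16949 * M ^ 4 + 118098 * M ^ 5 - 354294 * M ^ 6) - 432 * (M * (M + 1)) ^ 2 := by
        linear_combination hJ
      refine ⟨M - 47 * M ^ 2 + 1256 * M ^ 3 - 16949 * M ^ 4 + 118098 * M ^ 5
        - 354294 * M ^ 6 - k ^ 2, ?_⟩
      linarith [key, hsq]
  obtain ⟨h, hh⟩ := hHd
  obtain ⟨j, hj⟩ := hJd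
  have hJ' : J = ε * M + 3 * j := by linarith
  have main : (WeierstrassCurve.mk 1 0 0 H J : WeierstrassCurve ℤ).Δ ≡ 2 * ε * m [ZMOD 3] := by
    rw [Int.ModEq]
    have hΔ : (WeierstrassCurve.mk 1 0 0 H J : WeierstrassCurve ℤ).Δ - 2 * ε * m
        = 3 * (-ε * m - 8 * ε * n - j + 3 * h ^ 2 - 576 * h ^ 3
          - 144 * J ^ 2 + 72 * h * J) := by
      rw [hD, hh]
      rcases hε with rfl | rfl <;> (rw [hJ']; push_cast; ring)
    omega
  refine ⟨main, fun hm hd => hm ?_⟩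
  have h3 : (3 : ℤ) ∣ (WeierstrassCurve.mk 1 0 0 H J : WeierstrassCurve ℤ).Δ - 2 * ε * m :=
    Int.ModEq.dvd main.symm
  rcases hε with rfl | rfl <;> omega
end
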